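/- Let t be a complex number with |t| > 16. Then (1/(2π)³) ∫_{[0,2π]³} [ (1 + e^{iθ₁} + e^{iθ₂} + e^{iθ₃})(1 + e^{−iθ₁} + e^{−iθ₂} + e^{−iθ₃}) − t ]^{−1} dθ₁ dθ₂ dθ₃ = − ∑_{n≥0} t^{−n−1} · ∑_{p+q+r+s=n} ( n!/(p!q!r!s!) )², where the sum over (p,q,r,s) runs over quadruples of nonnegative integers summing to n, and the series converges absolutely. -/

import Mathlib

open Complex Finset intervalIntegral
noncomputable def E (k : ℤ) (θ : ℝ) : ℂ := Complex.exp ((k : ℂ) * Complex.I * θ)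

lemma int_exp (k : ℤ) : (∫ θ : ℝ in (0:ℝ)..(2*Real.pi), E k θ) =
    if k = 0 then (2*Real.pi : ℂ) else 0 := by
  rcases eq_or_ne k 0 with h | h
  · simp [h, E, integral_const]
  · rw [if_neg h]
    unfold E
    rw [integral_exp_mul_complex (by simp [h, Complex.I_ne_zero])]
    have h1 : Complex.exp ((k:ℂ)*Complex.I*(2*(Real.pi:ℂ))) = 1 := by
      rw [show (k:ℂ)*Complex.I*(2*(Real.pi:ℂ)) = (k : ℤ) * (2*Real.pi*Complex.I) by push_cast; ring]
      exact Complex.exp_int_mul_two_pi_mul_I k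
    push_cast
    rw [h1]
    simp

lemma int_CE (C : ℂ) (k : ℤ) :
    (∫ θ : ℝ in (0:ℝ)..(2*Real.pi), C * E k θ) = C * (if k = 0 then (2*Real.pi:ℂ) else 0) := by
  rw [integral_const_mul, int_exp]

lemma cont_E (k : ℤ) : Continuous (E k) := by
  unfold E; fun_prop

lemma pow_sum4 (w : Fin 4 → ℂ) (n : ℕ) :
    (∑ i, w i)^n = ∑ c ∈ Finset.Nat.antidiagonalTuple 4 n,
      (Nat.multinomial Finset.univ c : ℂ) * ∏ i, w i ^ c i := by
  rw [← Finset.piAntidiag_univ_fin_eq_antidiagonalTuple n 4, Finset.sum_pow_eq_sum_piAntidiag]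

lemma exp_pow_mul (p q : ℕ) (θ : ℝ) :
    Complex.exp (Complex.I*θ)^p * Complex.exp (-(Complex.I*θ))^q = E ((p:ℤ) - q) θ := by
  rw [← Complex.exp_nat_mul, ← Complex.exp_nat_mul, ← Complex.exp_add, E]
  congr 1
  push_cast
  ring

noncomputable def Amp (θ₁ θ₂ θ₃ : ℝ) : ℂ :=
  1 + Complex.exp (Complex.I*θ₁) + Complex.exp (Complex.I*θ₂) + Complex.exp (Complex.I*θ₃)
noncomputable def Bmp (θ₁ θ₂ θ₃ : ℝ) : ℂ :=
  1 + Complex.exp (-(Complex.I*θ₁)) + Complex.exp (-(Complex.I*θ₂)) + Complex.exp (-(Complex.I*θ₃))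

lemma P_expand (n : ℕ) (θ₁ θ₂ θ₃ : ℝ) :
    (Amp θ₁ θ₂ θ₃ * Bmp θ₁ θ₂ θ₃)^n =
      ∑ c ∈ Finset.Nat.antidiagonalTuple 4 n, ∑ d ∈ Finset.Nat.antidiagonalTuple 4 n,
        ((Nat.multinomial Finset.univ c : ℂ) * (Nat.multinomial Finset.univ d : ℂ) *
          E ((c 1 : ℤ) - d 1) θ₁ * E ((c 2 : ℤ) - d 2) θ₂) * E ((c 3 : ℤ) - d 3) θ₃ := by
  have hA : Amp θ₁ θ₂ θ₃ = ∑ i, ![ (1:ℂ), Complex.exp (Complex.I*θ₁),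
      Complex.exp (Complex.I*θ₂), Complex.exp (Complex.I*θ₃)] i := by
    simp [Amp, Fin.sum_univ_four]
  have hB : Bmp θ₁ θ₂ θ₃ = ∑ i, ![ (1:ℂ), Complex.exp (-(Complex.I*θ₁)),
      Complex.exp (-(Complex.I*θ₂)), Complex.exp (-(Complex.I*θ₃))] i := by
    simp [Bmp, Fin.sum_univ_four]
  rw [mul_pow, hA, hB, pow_sum4, pow_sum4, Finset.sum_mul_sum]
  refine Finset.sum_congr rfl fun c hc => Finset.sum_congr rfl fun d hd => ?_
  simp only [Fin.prod_univ_four, Matrix.cons_val_zero, Matrix.cons_val_one, Matrix.head_cons,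
    Matrix.cons_val_two, Matrix.tail_cons, Matrix.cons_val_three, one_pow]
  rw [← exp_pow_mul (c 1) (d 1) θ₁, ← exp_pow_mul (c 2) (d 2) θ₂, ← exp_pow_mul (c 3) (d 3) θ₃]
  ring

lemma int_sumsum {X Y : Type*} (s : Finset X) (t : Finset Y) (K : X → Y → ℂ) (k : X → Y → ℤ) :
    (∫ θ in (0:ℝ)..(2*Real.pi), ∑ c ∈ s, ∑ d ∈ t, K c d * E (k c d) θ)
    = ∑ c ∈ s, ∑ d ∈ t, K c d * (if k c d = 0 then (2*(Real.pi:ℂ)) else 0) := by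
  have h1 : ∀ (c : X), IntervalIntegrable (fun θ => ∑ d ∈ t, K c d * E (k c d) θ)
      MeasureTheory.volume 0 (2*Real.pi) := by
    intro c
    exact (continuous_finset_sum t fun d _ => continuous_const.mul (cont_E _)).intervalIntegrable _ _
  rw [integral_finset_sum (fun c _ => h1 c)]
  refine Finset.sum_congr rfl fun c _ => ?_
  rw [integral_finset_sum (f := fun d θ => K c d * E (k c d) θ) (fun d _ =>
    (continuous_const.mul (cont_E _)).intervalIntegrable _ _)]
  refine Finset.sum_congr rfl fun d _ => ?_
  have := int_CE (K c d) (k c d)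
  simpa using this

notation "T" => Finset.Nat.antidiagonalTuple 4
noncomputable def ite2pi (k : ℤ) : ℂ := if k = 0 then (2*(Real.pi:ℂ)) else 0
noncomputable def Mu (c : Fin 4 → ℕ) : ℂ := (Nat.multinomial Finset.univ c : ℂ)

lemma eq_of_tail_eq {n : ℕ} {c d : Fin 4 → ℕ}
    (hc : c ∈ T n) (hd : d ∈ T n)
    (h1 : c 1 = d 1) (h2 : c 2 = d 2) (h3 : c 3 = d 3) : c = d := by
  rw [Finset.Nat.mem_antidiagonalTuple, Fin.sum_univ_four] at hc hd
  have h0 : c 0 = d 0 := by omega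
  funext i; fin_cases i <;> assumption

lemma triple_int_P (n : ℕ) :
    (∫ θ₁ in (0:ℝ)..(2*Real.pi), ∫ θ₂ in (0:ℝ)..(2*Real.pi), ∫ θ₃ in (0:ℝ)..(2*Real.pi),
      (Amp θ₁ θ₂ θ₃ * Bmp θ₁ θ₂ θ₃)^n) =
    (2*(Real.pi:ℂ))^3 * ∑ c ∈ T n, (Mu c)^2 := by
  have step3 : ∀ θ₁ θ₂ : ℝ, (∫ θ₃ in (0:ℝ)..(2*Real.pi), (Amp θ₁ θ₂ θ₃ * Bmp θ₁ θ₂ θ₃)^n)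
      = ∑ c ∈ T n, ∑ d ∈ T n,
        ((Mu c * Mu d * ite2pi ((c 3:ℤ) - d 3) * E ((c 1:ℤ) - d 1) θ₁)) * E ((c 2:ℤ) - d 2) θ₂ := by
    intro θ₁ θ₂
    simp only [P_expand]
    rw [int_sumsum (T n) (T n)
      (fun c d => ((Nat.multinomial Finset.univ c : ℂ) * (Nat.multinomial Finset.univ d : ℂ) *
        E ((c 1:ℤ) - d 1) θ₁ * E ((c 2:ℤ) - d 2) θ₂))
      (fun c d => (c 3:ℤ) - d 3)]
    exact Finset.sum_congr rfl fun c _ => Finset.sum_congr rfl fun d _ => by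
      unfold ite2pi Mu; ring
  have step2 : ∀ θ₁ : ℝ, (∫ θ₂ in (0:ℝ)..(2*Real.pi), ∑ c ∈ T n, ∑ d ∈ T n,
        ((Mu c * Mu d * ite2pi ((c 3:ℤ) - d 3) * E ((c 1:ℤ) - d 1) θ₁)) * E ((c 2:ℤ) - d 2) θ₂)
      = ∑ c ∈ T n, ∑ d ∈ T n,
        (Mu c * Mu d * ite2pi ((c 3:ℤ) - d 3) * ite2pi ((c 2:ℤ) - d 2)) * E ((c 1:ℤ) - d 1) θ₁ := by
    intro θ₁
    rw [int_sumsum (T n) (T n)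
      (fun c d => (Mu c * Mu d * ite2pi ((c 3:ℤ) - d 3) * E ((c 1:ℤ) - d 1) θ₁))
      (fun c d => (c 2:ℤ) - d 2)]
    exact Finset.sum_congr rfl fun c _ => Finset.sum_congr rfl fun d _ => by
      unfold ite2pi; ring
  have step1 : (∫ θ₁ in (0:ℝ)..(2*Real.pi), ∑ c ∈ T n, ∑ d ∈ T n,
        (Mu c * Mu d * ite2pi ((c 3:ℤ) - d 3) * ite2pi ((c 2:ℤ) - d 2)) * E ((c 1:ℤ) - d 1) θ₁)
      = ∑ c ∈ T n, ∑ d ∈ T n,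
        (Mu c * Mu d) * (ite2pi ((c 1:ℤ) - d 1) * ite2pi ((c 2:ℤ) - d 2) * ite2pi ((c 3:ℤ) - d 3)) := by
    rw [int_sumsum (T n) (T n)
      (fun c d => (Mu c * Mu d * ite2pi ((c 3:ℤ) - d 3) * ite2pi ((c 2:ℤ) - d 2)))
      (fun c d => (c 1:ℤ) - d 1)]
    exact Finset.sum_congr rfl fun c _ => Finset.sum_congr rfl fun d _ => by
      unfold ite2pi; ring
  simp only [step3, step2, step1]
  rw [Finset.mul_sum]
  refine Finset.sum_congr rfl fun c hc => ?_
  have hterm : ∀ d ∈ T n,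
      (Mu c * Mu d) * (ite2pi ((c 1:ℤ) - d 1) * ite2pi ((c 2:ℤ) - d 2) * ite2pi ((c 3:ℤ) - d 3))
      = if d = c then (2*(Real.pi:ℂ))^3 * (Mu c * Mu d) else 0 := by
    intro d hd
    by_cases hdc : d = c
    · subst hdc
      simp [ite2pi]
      ring
    · rw [if_neg hdc]
      have hor : c 1 ≠ d 1 ∨ c 2 ≠ d 2 ∨ c 3 ≠ d 3 := by
        by_contra hcon
        push_neg at hcon
        exact hdc (eq_of_tail_eq hd hc hcon.1.symm hcon.2.1.symm hcon.2.2.symm)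
      simp only [ite2pi, sub_eq_zero, Int.natCast_inj]
      rcases hor with h | h | h <;> rw [if_neg h] <;> ring
  rw [Finset.sum_congr rfl hterm, Finset.sum_ite_eq' (T n) c
    (fun d => (2*(Real.pi:ℂ))^3 * (Mu c * Mu d)), if_pos hc]
  ring

lemma coeff_eq {n : ℕ} {c : Fin 4 → ℕ} (hc : c ∈ T n) :
    ((n.factorial : ℂ) / ∏ i, ((c i).factorial : ℂ)) = Mu c := by
  rw [Finset.Nat.mem_antidiagonalTuple] at hc
  have h := Nat.multinomial_spec (Finset.univ : Finset (Fin 4)) c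
  rw [hc] at h
  have hne : (∏ i, ((c i).factorial : ℂ)) ≠ 0 := by
    refine Finset.prod_ne_zero_iff.mpr fun i _ => ?_
    exact_mod_cast (Nat.factorial_pos (c i)).ne'
  rw [div_eq_iff hne, Mu]
  rw [← h]
  push_cast
  ring

lemma sum_coeff_eq (n : ℕ) :
    (∑ c ∈ T n, ((n.factorial : ℂ) / ∏ i, ((c i).factorial : ℂ))^2)
    = ((∑ c ∈ T n, (Nat.multinomial Finset.univ c)^2 : ℕ) : ℂ) := by
  push_cast
  exact Finset.sum_congr rfl fun c hc => by rw [coeff_eq hc, Mu]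

lemma sum_mult_sq_le (n : ℕ) :
    (∑ c ∈ T n, (Nat.multinomial Finset.univ c)^2) ≤ 16^n := by
  have hsum : (∑ c ∈ T n, Nat.multinomial Finset.univ c) = 4^n := by
    have := Finset.sum_pow_eq_sum_piAntidiag (Finset.univ : Finset (Fin 4)) (fun _ => (1:ℕ)) n
    rw [Finset.piAntidiag_univ_fin_eq_antidiagonalTuple n 4] at this
    simpa using this.symm
  calc (∑ c ∈ T n, (Nat.multinomial Finset.univ c)^2)
      ≤ ∑ c ∈ T n, Nat.multinomial Finset.univ c * 4^n := by
        refine Finset.sum_le_sum fun c hc => ?_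
        rw [pow_two]
        exact Nat.mul_le_mul_left _ (hsum ▸ Finset.single_le_sum (fun _ _ => Nat.zero_le _) hc)
    _ = 4^n * 4^n := by rw [← Finset.sum_mul, hsum]
    _ = 16^n := by rw [← mul_pow]; norm_num

lemma normAB_le (θ₁ θ₂ θ₃ : ℝ) : ‖Amp θ₁ θ₂ θ₃ * Bmp θ₁ θ₂ θ₃‖ ≤ 16 := by
  have he : ∀ θ : ℝ, ‖Complex.exp (Complex.I * θ)‖ = 1 := by
    intro θ; rw [Complex.norm_exp]; simp
  have he' : ∀ θ : ℝ, ‖Complex.exp (-(Complex.I * θ))‖ = 1 := by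
    intro θ; rw [Complex.norm_exp]; simp
  have hA : ‖Amp θ₁ θ₂ θ₃‖ ≤ 4 := by
    unfold Amp
    calc ‖(1:ℂ) + _ + _ + _‖ ≤ ‖(1:ℂ) + _ + _‖ + ‖Complex.exp (Complex.I*(θ₃:ℝ))‖ := norm_add_le _ _
      _ ≤ (‖(1:ℂ) + _‖ + ‖Complex.exp (Complex.I*(θ₂:ℝ))‖) + _ := by
          gcongr; exact norm_add_le _ _
      _ ≤ ((‖(1:ℂ)‖ + ‖Complex.exp (Complex.I*(θ₁:ℝ))‖) + _) + _ := by
          gcongr; exact norm_add_le _ _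
      _ ≤ 4 := by rw [he, he, he]; norm_num
  have hB : ‖Bmp θ₁ θ₂ θ₃‖ ≤ 4 := by
    unfold Bmp
    calc ‖(1:ℂ) + _ + _ + _‖ ≤ ‖(1:ℂ) + _ + _‖ + ‖Complex.exp (-(Complex.I*(θ₃:ℝ)))‖ := norm_add_le _ _
      _ ≤ (‖(1:ℂ) + _‖ + ‖Complex.exp (-(Complex.I*(θ₂:ℝ)))‖) + _ := by
          gcongr; exact norm_add_le _ _
      _ ≤ ((‖(1:ℂ)‖ + ‖Complex.exp (-(Complex.I*(θ₁:ℝ)))‖) + _) + _ := by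
          gcongr; exact norm_add_le _ _
      _ ≤ 4 := by rw [he', he', he']; norm_num
  calc ‖Amp θ₁ θ₂ θ₃ * Bmp θ₁ θ₂ θ₃‖ = ‖Amp θ₁ θ₂ θ₃‖ * ‖Bmp θ₁ θ₂ θ₃‖ := norm_mul _ _
    _ ≤ 4 * 4 := mul_le_mul hA hB (norm_nonneg _) (by norm_num)
    _ = 16 := by norm_num

lemma contAB : Continuous fun p : ℝ × ℝ × ℝ => Amp p.1 p.2.1 p.2.2 * Bmp p.1 p.2.1 p.2.2 := by
  unfold Amp Bmp; fun_prop

noncomputable def gfun (t : ℂ) (n : ℕ) (θ₁ θ₂ θ₃ : ℝ) : ℂ :=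
  -((t^(n+1))⁻¹) * (Amp θ₁ θ₂ θ₃ * Bmp θ₁ θ₂ θ₃)^n
noncomputable def Ffun (t : ℂ) (θ₁ θ₂ θ₃ : ℝ) : ℂ :=
  (Amp θ₁ θ₂ θ₃ * Bmp θ₁ θ₂ θ₃ - t)⁻¹

-- parametric continuity helpers
lemma par3 {G : ℝ → ℝ → ℝ → ℂ} (hG : Continuous fun p : ℝ × ℝ × ℝ => G p.1 p.2.1 p.2.2) :
    Continuous fun p : ℝ × ℝ => ∫ z in (0:ℝ)..(2*Real.pi), G p.1 p.2 z := by
  exact intervalIntegral.continuous_parametric_intervalIntegral_of_continuous'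
    (f := fun (p : ℝ × ℝ) (z : ℝ) => G p.1 p.2 z)
    (hG.comp (by fun_prop : Continuous fun q : (ℝ × ℝ) × ℝ => (q.1.1, q.1.2, q.2))) 0 (2*Real.pi)

lemma par2 {H : ℝ → ℝ → ℂ} (hH : Continuous fun p : ℝ × ℝ => H p.1 p.2) :
    Continuous fun x : ℝ => ∫ y in (0:ℝ)..(2*Real.pi), H x y := by
  exact intervalIntegral.continuous_parametric_intervalIntegral_of_continuous'
    (f := fun (x : ℝ) (y : ℝ) => H x y) (by exact hH) 0 (2*Real.pi)

lemma hne {t : ℂ} (habs : (16:ℝ) < ‖t‖) (θ₁ θ₂ θ₃ : ℝ) :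
    Amp θ₁ θ₂ θ₃ * Bmp θ₁ θ₂ θ₃ - t ≠ 0 := by
  intro h
  rw [sub_eq_zero] at h
  have h2 := normAB_le θ₁ θ₂ θ₃
  rw [h] at h2
  linarith

lemma contF {t : ℂ} (habs : (16:ℝ) < ‖t‖) :
    Continuous fun p : ℝ × ℝ × ℝ => Ffun t p.1 p.2.1 p.2.2 :=
  (contAB.sub continuous_const).inv₀ fun p => hne habs p.1 p.2.1 p.2.2

lemma contPn (n : ℕ) :
    Continuous fun p : ℝ × ℝ × ℝ => (Amp p.1 p.2.1 p.2.2 * Bmp p.1 p.2.1 p.2.2)^n :=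
  contAB.pow n

-- continuity in one or two vars from joint continuity
lemma cont3of3 {G : ℝ → ℝ → ℝ → ℂ} (hG : Continuous fun p : ℝ × ℝ × ℝ => G p.1 p.2.1 p.2.2)
    (θ₁ θ₂ : ℝ) : Continuous fun θ₃ => G θ₁ θ₂ θ₃ :=
  hG.comp (by fun_prop : Continuous fun θ₃ : ℝ => ((θ₁, θ₂, θ₃) : ℝ × ℝ × ℝ))

lemma contJ3 {G : ℝ → ℝ → ℝ → ℂ} (hG : Continuous fun p : ℝ × ℝ × ℝ => G p.1 p.2.1 p.2.2)
    (θ₁ : ℝ) : Continuous fun θ₂ => ∫ z in (0:ℝ)..(2*Real.pi), G θ₁ θ₂ z :=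
  (par3 hG).comp (by fun_prop : Continuous fun θ₂ : ℝ => ((θ₁, θ₂) : ℝ × ℝ))

lemma contJ2 {G : ℝ → ℝ → ℝ → ℂ} (hG : Continuous fun p : ℝ × ℝ × ℝ => G p.1 p.2.1 p.2.2) :
    Continuous fun θ₁ => ∫ y in (0:ℝ)..(2*Real.pi), ∫ z in (0:ℝ)..(2*Real.pi), G θ₁ y z :=
  par2 (par3 hG)

lemma int_g (t : ℂ) (n : ℕ) :
    (∫ θ₁ in (0:ℝ)..(2*Real.pi), ∫ θ₂ in (0:ℝ)..(2*Real.pi), ∫ θ₃ in (0:ℝ)..(2*Real.pi),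
      gfun t n θ₁ θ₂ θ₃)
    = -((t^(n+1))⁻¹) * ((2*(Real.pi:ℂ))^3 * ∑ c ∈ T n, (Mu c)^2) := by
  unfold gfun
  simp only [integral_const_mul]
  rw [triple_int_P]

lemma int_PS (t : ℂ) (N : ℕ) :
    (∫ θ₁ in (0:ℝ)..(2*Real.pi), ∫ θ₂ in (0:ℝ)..(2*Real.pi), ∫ θ₃ in (0:ℝ)..(2*Real.pi),
      ∑ n ∈ Finset.range N, gfun t n θ₁ θ₂ θ₃)
    = ∑ n ∈ Finset.range N, -((t^(n+1))⁻¹) * ((2*(Real.pi:ℂ))^3 * ∑ c ∈ T n, (Mu c)^2) := by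
  have h3 : ∀ θ₁ θ₂ : ℝ, (∫ θ₃ in (0:ℝ)..(2*Real.pi), ∑ n ∈ Finset.range N, gfun t n θ₁ θ₂ θ₃)
      = ∑ n ∈ Finset.range N, -((t^(n+1))⁻¹) *
          (∫ θ₃ in (0:ℝ)..(2*Real.pi), (Amp θ₁ θ₂ θ₃ * Bmp θ₁ θ₂ θ₃)^n) := by
    intro θ₁ θ₂
    rw [integral_finset_sum (f := fun n θ₃ => gfun t n θ₁ θ₂ θ₃) (fun n _ =>
      ((continuous_const.mul (cont3of3 (G := fun a b c => (Amp a b c * Bmp a b c)^n)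
        (contPn n) θ₁ θ₂)).intervalIntegrable _ _))]
    simp only [gfun, integral_const_mul]
  have h2 : ∀ θ₁ : ℝ, (∫ θ₂ in (0:ℝ)..(2*Real.pi), ∑ n ∈ Finset.range N, -((t^(n+1))⁻¹) *
          (∫ θ₃ in (0:ℝ)..(2*Real.pi), (Amp θ₁ θ₂ θ₃ * Bmp θ₁ θ₂ θ₃)^n))
      = ∑ n ∈ Finset.range N, -((t^(n+1))⁻¹) *
          (∫ θ₂ in (0:ℝ)..(2*Real.pi), ∫ θ₃ in (0:ℝ)..(2*Real.pi),
            (Amp θ₁ θ₂ θ₃ * Bmp θ₁ θ₂ θ₃)^n) := by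
    intro θ₁
    rw [integral_finset_sum (f := fun n θ₂ => -((t^(n+1))⁻¹) *
          (∫ θ₃ in (0:ℝ)..(2*Real.pi), (Amp θ₁ θ₂ θ₃ * Bmp θ₁ θ₂ θ₃)^n)) (fun n _ =>
      ((continuous_const.mul (contJ3 (G := fun a b c => (Amp a b c * Bmp a b c)^n)
        (contPn n) θ₁)).intervalIntegrable _ _))]
    simp only [integral_const_mul]
  simp only [h3, h2]
  rw [integral_finset_sum (f := fun n θ₁ => -((t^(n+1))⁻¹) *
        (∫ θ₂ in (0:ℝ)..(2*Real.pi), ∫ θ₃ in (0:ℝ)..(2*Real.pi),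
          (Amp θ₁ θ₂ θ₃ * Bmp θ₁ θ₂ θ₃)^n)) (fun n _ =>
    ((continuous_const.mul (contJ2 (G := fun a b c => (Amp a b c * Bmp a b c)^n)
      (contPn n))).intervalIntegrable _ _))]
  simp only [integral_const_mul]
  exact Finset.sum_congr rfl fun n _ => by rw [triple_int_P]

theorem stmt15 (t : ℂ) (ht : 16 < ‖t‖) :
    Summable (fun n : ℕ => ‖(t^(n+1))⁻¹ *
      ∑ c ∈ Finset.Nat.antidiagonalTuple 4 n,
        ((n.factorial : ℂ) / ∏ i, ((c i).factorial : ℂ))^2‖) ∧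
    ((1/(2*Real.pi)^3 : ℝ) : ℂ) *
      (∫ θ₁ in (0:ℝ)..(2*Real.pi), ∫ θ₂ in (0:ℝ)..(2*Real.pi), ∫ θ₃ in (0:ℝ)..(2*Real.pi),
        ((1 + Complex.exp (Complex.I*θ₁) + Complex.exp (Complex.I*θ₂) +
            Complex.exp (Complex.I*θ₃)) *
         (1 + Complex.exp (-(Complex.I*θ₁)) + Complex.exp (-(Complex.I*θ₂)) +
            Complex.exp (-(Complex.I*θ₃))) - t)⁻¹) =
    -∑' n : ℕ, (t^(n+1))⁻¹ *
      ∑ c ∈ Finset.Nat.antidiagonalTuple 4 n,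
        ((n.factorial : ℂ) / ∏ i, ((c i).factorial : ℂ))^2 := by
  have habs : (16:ℝ) < ‖t‖ := by exact ht
  have ht0 : (0:ℝ) < ‖t‖ := by linarith
  have htne : t ≠ 0 := by
    intro h; rw [h, norm_zero] at ht0; exact lt_irrefl 0 ht0
  set r : ℝ := 16 / ‖t‖ with hrdef
  have hr0 : 0 ≤ r := by positivity
  have hr1 : r < 1 := (div_lt_one ht0).mpr habs
  have hSnle : ∀ n : ℕ, ((∑ c ∈ T n, (Nat.multinomial Finset.univ c)^2 : ℕ) : ℝ) ≤ 16^n := by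
    intro n
    calc ((∑ c ∈ T n, (Nat.multinomial Finset.univ c)^2 : ℕ) : ℝ)
        ≤ ((16^n : ℕ) : ℝ) := by exact_mod_cast sum_mult_sq_le n
      _ = 16^n := by push_cast; ring
  have halg : ∀ n : ℕ, ((‖t‖^(n+1))⁻¹ * (16:ℝ)^n) = ‖t‖⁻¹ * r^n := by
    intro n
    rw [hrdef, div_pow, pow_succ]
    field_simp
  have hkey : ∀ n : ℕ, ‖(t^(n+1))⁻¹ * ((∑ c ∈ T n, (Nat.multinomial Finset.univ c)^2 : ℕ) : ℂ)‖
      ≤ ‖t‖⁻¹ * r^n := by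
    intro n
    rw [norm_mul, norm_inv, norm_pow, Complex.norm_natCast, ← halg n]
    gcongr
    exact hSnle n
  have hgeo : Summable (fun n : ℕ => ‖t‖⁻¹ * r^n) :=
    (summable_geometric_of_lt_one hr0 hr1).mul_left _
  constructor
  · refine Summable.of_nonneg_of_le (fun n => norm_nonneg _) (fun n => ?_) hgeo
    rw [sum_coeff_eq n]
    exact hkey n
  -- part 2
  have hpt : ∀ θ₁ θ₂ θ₃ : ℝ, HasSum (fun n : ℕ => gfun t n θ₁ θ₂ θ₃) (Ffun t θ₁ θ₂ θ₃) := by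
    intro θ₁ θ₂ θ₃
    set w := Amp θ₁ θ₂ θ₃ * Bmp θ₁ θ₂ θ₃ with hw
    have hwn : ‖w / t‖ < 1 := by
      rw [norm_div, div_lt_one ht0]
      exact lt_of_le_of_lt (normAB_le θ₁ θ₂ θ₃) habs
    have h0 := (hasSum_geometric_of_norm_lt_one hwn).mul_left (-t⁻¹)
    have hwt : w - t ≠ 0 := hne habs θ₁ θ₂ θ₃
    have h2 : t * (1 - w/t) = t - w := by field_simp
    have hval : -t⁻¹ * (1 - w/t)⁻¹ = (w - t)⁻¹ := by
      calc -t⁻¹ * (1 - w/t)⁻¹ = -((t * (1 - w/t))⁻¹) := by rw [mul_inv]; ring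
        _ = -((t - w)⁻¹) := by rw [h2]
        _ = (w - t)⁻¹ := by rw [← inv_neg, neg_sub]
    rw [hval] at h0
    have heq : (fun n : ℕ => gfun t n θ₁ θ₂ θ₃) = fun n : ℕ => -t⁻¹ * (w/t)^n := by
      funext n
      rw [gfun, ← hw, div_pow, pow_succ, mul_inv, div_eq_mul_inv]
      ring
    rw [Ffun, ← hw]
    rw [heq]
    exact h0
  have hgnorm : ∀ (n : ℕ) (θ₁ θ₂ θ₃ : ℝ), ‖gfun t n θ₁ θ₂ θ₃‖ ≤ ‖t‖⁻¹ * r^n := by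
    intro n θ₁ θ₂ θ₃
    rw [gfun, norm_mul, norm_neg, norm_inv, norm_pow, norm_pow, ← halg n]
    exact mul_le_mul_of_nonneg_left
      (pow_le_pow_left₀ (norm_nonneg _) (normAB_le θ₁ θ₂ θ₃) n) (by positivity)
  have herr : ∀ (N : ℕ) (θ₁ θ₂ θ₃ : ℝ),
      ‖Ffun t θ₁ θ₂ θ₃ - ∑ n ∈ Finset.range N, gfun t n θ₁ θ₂ θ₃‖
        ≤ (‖t‖⁻¹ * (1-r)⁻¹) * r^N := by
    intro N θ₁ θ₂ θ₃
    have hps := hpt θ₁ θ₂ θ₃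
    have hsummable : Summable (fun n => gfun t n θ₁ θ₂ θ₃) := hps.summable
    have hshift := Summable.sum_add_tsum_nat_add N hsummable
    have hFd : Ffun t θ₁ θ₂ θ₃ - ∑ n ∈ Finset.range N, gfun t n θ₁ θ₂ θ₃
        = ∑' i, gfun t (i+N) θ₁ θ₂ θ₃ := by
      rw [← hps.tsum_eq, ← hshift]
      ring
    rw [hFd]
    have hnorm_b : ∀ i : ℕ, ‖gfun t (i+N) θ₁ θ₂ θ₃‖ ≤ ‖t‖⁻¹ * r^(i+N) :=
      fun i => hgnorm _ _ _ _
    have hsum2 : Summable (fun i : ℕ => ‖t‖⁻¹ * r^(i+N)) := by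
      have := (summable_geometric_of_lt_one hr0 hr1).mul_left (‖t‖⁻¹ * r^N)
      refine this.congr fun i => ?_
      rw [pow_add]
      ring
    have hsum1 : Summable fun i => ‖gfun t (i+N) θ₁ θ₂ θ₃‖ :=
      Summable.of_nonneg_of_le (fun _ => norm_nonneg _) hnorm_b hsum2
    calc ‖∑' i, gfun t (i+N) θ₁ θ₂ θ₃‖ ≤ ∑' i, ‖gfun t (i+N) θ₁ θ₂ θ₃‖ :=
          norm_tsum_le_tsum_norm hsum1
      _ ≤ ∑' i, ‖t‖⁻¹ * r^(i+N) := Summable.tsum_le_tsum hnorm_b hsum1 hsum2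
      _ = (‖t‖⁻¹ * (1-r)⁻¹) * r^N := by
          simp_rw [pow_add]
          rw [tsum_mul_left, tsum_mul_right, tsum_geometric_of_lt_one hr0 hr1]
          ring
  -- continuity of partial sums
  have contPS : ∀ N : ℕ, Continuous fun p : ℝ × ℝ × ℝ =>
      ∑ n ∈ Finset.range N, gfun t n p.1 p.2.1 p.2.2 := by
    intro N
    refine continuous_finset_sum _ fun n _ => ?_
    unfold gfun
    exact continuous_const.mul (contPn n)
  have h1r : (0:ℝ) < 1 - r := by linarith
  have hC0 : (0:ℝ) ≤ ‖t‖⁻¹ * (1-r)⁻¹ := by positivity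
  -- error bound for the triple integral
  have hdiff : ∀ N : ℕ,
      ‖(∫ θ₁ in (0:ℝ)..(2*Real.pi), ∫ θ₂ in (0:ℝ)..(2*Real.pi), ∫ θ₃ in (0:ℝ)..(2*Real.pi),
          Ffun t θ₁ θ₂ θ₃)
        - ∑ n ∈ Finset.range N, -((t^(n+1))⁻¹) * ((2*(Real.pi:ℂ))^3 * ∑ c ∈ T n, (Mu c)^2)‖
      ≤ (((‖t‖⁻¹ * (1-r)⁻¹) * (2*Real.pi)^3)) * r^N := by
    intro N
    rw [← int_PS t N]
    have hε0 : (0:ℝ) ≤ (‖t‖⁻¹ * (1-r)⁻¹) * r^N := by positivity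
    have h3 : ∀ θ₁ θ₂ : ℝ,
        ‖(∫ θ₃ in (0:ℝ)..(2*Real.pi), Ffun t θ₁ θ₂ θ₃)
          - ∫ θ₃ in (0:ℝ)..(2*Real.pi), ∑ n ∈ Finset.range N, gfun t n θ₁ θ₂ θ₃‖
        ≤ ((‖t‖⁻¹ * (1-r)⁻¹) * r^N) * (2*Real.pi) := by
      intro θ₁ θ₂
      rw [← intervalIntegral.integral_sub
        ((cont3of3 (G := Ffun t) (contF habs) θ₁ θ₂).intervalIntegrable _ _)
        ((cont3of3 (G := fun a b c => ∑ n ∈ Finset.range N, gfun t n a b c)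
          (contPS N) θ₁ θ₂).intervalIntegrable _ _)]
      calc ‖∫ θ₃ in (0:ℝ)..(2*Real.pi), (Ffun t θ₁ θ₂ θ₃
              - ∑ n ∈ Finset.range N, gfun t n θ₁ θ₂ θ₃)‖
          ≤ ((‖t‖⁻¹ * (1-r)⁻¹) * r^N) * |2*Real.pi - 0| :=
            intervalIntegral.norm_integral_le_of_norm_le_const
              (fun θ₃ _ => herr N θ₁ θ₂ θ₃)
        _ = ((‖t‖⁻¹ * (1-r)⁻¹) * r^N) * (2*Real.pi) := by
            rw [sub_zero, _root_.abs_of_nonneg Real.two_pi_pos.le]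
    have h2 : ∀ θ₁ : ℝ,
        ‖(∫ θ₂ in (0:ℝ)..(2*Real.pi), ∫ θ₃ in (0:ℝ)..(2*Real.pi), Ffun t θ₁ θ₂ θ₃)
          - ∫ θ₂ in (0:ℝ)..(2*Real.pi), ∫ θ₃ in (0:ℝ)..(2*Real.pi),
              ∑ n ∈ Finset.range N, gfun t n θ₁ θ₂ θ₃‖
        ≤ (((‖t‖⁻¹ * (1-r)⁻¹) * r^N) * (2*Real.pi)) * (2*Real.pi) := by
      intro θ₁
      rw [← intervalIntegral.integral_sub
        ((contJ3 (G := Ffun t) (contF habs) θ₁).intervalIntegrable _ _)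
        ((contJ3 (G := fun a b c => ∑ n ∈ Finset.range N, gfun t n a b c)
          (contPS N) θ₁).intervalIntegrable _ _)]
      calc ‖∫ θ₂ in (0:ℝ)..(2*Real.pi), ((∫ θ₃ in (0:ℝ)..(2*Real.pi), Ffun t θ₁ θ₂ θ₃)
              - ∫ θ₃ in (0:ℝ)..(2*Real.pi), ∑ n ∈ Finset.range N, gfun t n θ₁ θ₂ θ₃)‖
          ≤ (((‖t‖⁻¹ * (1-r)⁻¹) * r^N) * (2*Real.pi)) * |2*Real.pi - 0| :=
            intervalIntegral.norm_integral_le_of_norm_le_const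
              (fun θ₂ _ => h3 θ₁ θ₂)
        _ = _ := by rw [sub_zero, _root_.abs_of_nonneg Real.two_pi_pos.le]
    calc ‖(∫ θ₁ in (0:ℝ)..(2*Real.pi), ∫ θ₂ in (0:ℝ)..(2*Real.pi),
              ∫ θ₃ in (0:ℝ)..(2*Real.pi), Ffun t θ₁ θ₂ θ₃)
          - ∫ θ₁ in (0:ℝ)..(2*Real.pi), ∫ θ₂ in (0:ℝ)..(2*Real.pi),
              ∫ θ₃ in (0:ℝ)..(2*Real.pi), ∑ n ∈ Finset.range N, gfun t n θ₁ θ₂ θ₃‖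
        = ‖∫ θ₁ in (0:ℝ)..(2*Real.pi), ((∫ θ₂ in (0:ℝ)..(2*Real.pi),
              ∫ θ₃ in (0:ℝ)..(2*Real.pi), Ffun t θ₁ θ₂ θ₃)
          - ∫ θ₂ in (0:ℝ)..(2*Real.pi), ∫ θ₃ in (0:ℝ)..(2*Real.pi),
              ∑ n ∈ Finset.range N, gfun t n θ₁ θ₂ θ₃)‖ := by
          rw [intervalIntegral.integral_sub
            ((contJ2 (G := Ffun t) (contF habs)).intervalIntegrable _ _)
            ((contJ2 (G := fun a b c => ∑ n ∈ Finset.range N, gfun t n a b c)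
              (contPS N)).intervalIntegrable _ _)]
      _ ≤ ((((‖t‖⁻¹ * (1-r)⁻¹) * r^N) * (2*Real.pi)) * (2*Real.pi)) * |2*Real.pi - 0| :=
            intervalIntegral.norm_integral_le_of_norm_le_const (fun θ₁ _ => h2 θ₁)
      _ = (((‖t‖⁻¹ * (1-r)⁻¹) * (2*Real.pi)^3)) * r^N := by
            rw [sub_zero, _root_.abs_of_nonneg Real.two_pi_pos.le]
            ring
  -- summability of the coefficient series
  have hnorm2pi : ‖(2*(Real.pi:ℂ))^3‖ = (2*Real.pi)^3 := by
    rw [norm_pow, show (2*(Real.pi:ℂ)) = ((2*Real.pi : ℝ) : ℂ) by push_cast; ring,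
      Complex.norm_real, Real.norm_eq_abs, _root_.abs_of_nonneg Real.two_pi_pos.le]
  have hMu : ∀ n : ℕ, (∑ c ∈ T n, (Mu c)^2)
      = ((∑ c ∈ T n, (Nat.multinomial Finset.univ c)^2 : ℕ) : ℂ) := by
    intro n
    rw [Nat.cast_sum]
    exact Finset.sum_congr rfl fun c _ => by rw [Mu, Nat.cast_pow]
  have hsa : Summable (fun n : ℕ =>
      -((t^(n+1))⁻¹) * ((2*(Real.pi:ℂ))^3 * ∑ c ∈ T n, (Mu c)^2)) := by
    refine Summable.of_norm_bounded (hgeo.mul_left ((2*Real.pi)^3)) fun n => ?_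
    have : -((t^(n+1))⁻¹) * ((2*(Real.pi:ℂ))^3 * ∑ c ∈ T n, (Mu c)^2)
        = (2*(Real.pi:ℂ))^3 * (-((t^(n+1))⁻¹ * ∑ c ∈ T n, (Mu c)^2)) := by ring
    rw [this, norm_mul, norm_neg, hnorm2pi, hMu n]
    exact mul_le_mul_of_nonneg_left (hkey n) (by positivity)
  -- limit identification
  have htendC : Filter.Tendsto
      (fun N : ℕ => (((‖t‖⁻¹ * (1-r)⁻¹) * (2*Real.pi)^3)) * r^N)
      Filter.atTop (nhds 0) := by
    simpa using (tendsto_pow_atTop_nhds_zero_of_lt_one hr0 hr1).const_mul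
      (((‖t‖⁻¹ * (1-r)⁻¹) * (2*Real.pi)^3))
  have htend1 : Filter.Tendsto (fun N : ℕ => ∑ n ∈ Finset.range N,
        -((t^(n+1))⁻¹) * ((2*(Real.pi:ℂ))^3 * ∑ c ∈ T n, (Mu c)^2))
      Filter.atTop (nhds (∫ θ₁ in (0:ℝ)..(2*Real.pi), ∫ θ₂ in (0:ℝ)..(2*Real.pi),
        ∫ θ₃ in (0:ℝ)..(2*Real.pi), Ffun t θ₁ θ₂ θ₃)) := by
    rw [tendsto_iff_norm_sub_tendsto_zero]
    refine squeeze_zero (fun N => norm_nonneg _) (fun N => ?_) htendC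
    rw [norm_sub_rev]
    exact hdiff N
  have hIf : (∫ θ₁ in (0:ℝ)..(2*Real.pi), ∫ θ₂ in (0:ℝ)..(2*Real.pi),
        ∫ θ₃ in (0:ℝ)..(2*Real.pi), Ffun t θ₁ θ₂ θ₃)
      = ∑' n : ℕ, -((t^(n+1))⁻¹) * ((2*(Real.pi:ℂ))^3 * ∑ c ∈ T n, (Mu c)^2) :=
    tendsto_nhds_unique htend1 hsa.hasSum.tendsto_sum_nat
  -- final assembly
  have hpi : ((1/(2*Real.pi)^3 : ℝ) : ℂ) * (2*(Real.pi:ℂ))^3 = 1 := by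
    have hne2 : (2*(Real.pi:ℂ))^3 ≠ 0 :=
      pow_ne_zero _ (mul_ne_zero two_ne_zero (Complex.ofReal_ne_zero.mpr Real.pi_ne_zero))
    push_cast
    field_simp
  show ((1/(2*Real.pi)^3 : ℝ) : ℂ) *
      (∫ θ₁ in (0:ℝ)..(2*Real.pi), ∫ θ₂ in (0:ℝ)..(2*Real.pi), ∫ θ₃ in (0:ℝ)..(2*Real.pi),
        Ffun t θ₁ θ₂ θ₃) = _
  rw [hIf, ← tsum_mul_left, ← tsum_neg]
  refine tsum_congr fun n => ?_
  rw [sum_coeff_eq n, ← hMu n]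
  calc ((1/(2*Real.pi)^3 : ℝ) : ℂ) *
        (-((t^(n+1))⁻¹) * ((2*(Real.pi:ℂ))^3 * ∑ c ∈ T n, (Mu c)^2))
      = (((1/(2*Real.pi)^3 : ℝ) : ℂ) * (2*(Real.pi:ℂ))^3) *
        (-((t^(n+1))⁻¹ * ∑ c ∈ T n, (Mu c)^2)) := by ring
    _ = -((t^(n+1))⁻¹ * ∑ c ∈ T n, (Mu c)^2) := by rw [hpi, one_mul]
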